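/- For every choice of positive parameters (θ, m, σ) and every p > 0 there exists a unique Nash equilibrium: a unique vector y* ∈ ℝᴺ with all components positive satisfying Σ_{k=1}^N m_k (y*_k − y*_i) + σ (θ_i − (y*_i)^p) y*_i = 0 for every i = 1,…,N. -/

import Mathlib

open Filter Topology Finset Real

set_option maxHeartbeats 1000000

namespace NashAux

/-- The one-dimensional function `g t = t * (A - b + c * t ^ p)` whose level sets define the
components of the equilibrium in terms of the weighted average `S`. -/
noncomputable def g (A b c p t : ℝ) : ℝ := t * (A - b + c * t ^ p)

lemma g_lt {A b c p : ℝ} (hc : 0 < c) (hp : 0 < p) {t1 t2 : ℝ}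
    (h1 : 0 < t1) (h12 : t1 < t2)
    (hpos : 0 < g A b c p t1 ∨ 0 < g A b c p t2) :
    g A b c p t1 < g A b c p t2 := by
  have h2 : 0 < t2 := h1.trans h12
  have hI : c * t1 ^ p < c * t2 ^ p :=
    mul_lt_mul_of_pos_left (Real.rpow_lt_rpow h1.le h12 hp) hc
  simp only [g] at *
  rcases hpos with h | h
  · have hI1 : 0 < A - b + c * t1 ^ p := (mul_pos_iff_of_pos_left h1).mp h
    nlinarith
  · have hI2 : 0 < A - b + c * t2 ^ p := (mul_pos_iff_of_pos_left h2).mp h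
    rcases le_or_gt (A - b + c * t1 ^ p) 0 with h0 | h0
    · calc t1 * (A - b + c * t1 ^ p) ≤ 0 := mul_nonpos_of_nonneg_of_nonpos h1.le h0
        _ < _ := h
    · nlinarith

lemma exists_root {A b c p S : ℝ} (hA : 0 < A) (hb : 0 < b) (hc : 0 < c) (hp : 0 < p)
    (hS : 0 < S) : ∃ t, 0 < t ∧ g A b c p t = S := by
  set T : ℝ := max ((b / c) ^ p⁻¹) (S / A) with hT
  have hT0 : 0 < T := lt_of_lt_of_le (div_pos hS hA) (le_max_right _ _)
  have hbc : 0 < b / c := div_pos hb hc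
  have hTbc : b ≤ c * T ^ p := by
    have h1 : (b / c) ^ p⁻¹ ≤ T := le_max_left _ _
    have h2 : ((b / c) ^ p⁻¹) ^ p ≤ T ^ p :=
      Real.rpow_le_rpow (Real.rpow_nonneg hbc.le _) h1 hp.le
    rw [Real.rpow_inv_rpow hbc.le hp.ne'] at h2
    calc b = c * (b / c) := by field_simp
      _ ≤ c * T ^ p := by nlinarith
  have hgT : S ≤ g A b c p T := by
    simp only [g]
    have hTA : S ≤ T * A := by
      have : S / A ≤ T := le_max_right _ _
      calc S = (S / A) * A := by field_simp
        _ ≤ T * A := by nlinarith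
    nlinarith
  have hcont : ContinuousOn (g A b c p) (Set.Icc 0 T) := by
    apply Continuous.continuousOn
    have hc1 : Continuous (fun t : ℝ => t ^ p) := by
      rw [continuous_iff_continuousAt]
      intro x
      exact Real.continuousAt_rpow_const x p (Or.inr hp.le)
    have : Continuous (fun t : ℝ => t * (A - b + c * t ^ p)) :=
      continuous_id.mul (Continuous.add continuous_const (continuous_const.mul hc1))
    convert this using 1
    rfl
  have h0 : g A b c p 0 = 0 := by simp [g]
  have hmem : S ∈ Set.Ioc (g A b c p 0) (g A b c p T) := by
    rw [h0]; exact ⟨hS, hgT⟩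
  obtain ⟨t, ht, hgt⟩ := intermediate_value_Ioc hT0.le hcont hmem
  exact ⟨t, ht.1, hgt⟩

lemma existsUnique_root {A b c p S : ℝ} (hA : 0 < A) (hb : 0 < b) (hc : 0 < c) (hp : 0 < p)
    (hS : 0 < S) : ∃! t, 0 < t ∧ g A b c p t = S := by
  obtain ⟨t, ht, hgt⟩ := exists_root hA hb hc hp hS
  refine ⟨t, ⟨ht, hgt⟩, ?_⟩
  rintro t' ⟨ht', hgt'⟩
  by_contra hne
  rcases lt_or_gt_of_ne hne with h | h
  · have := g_lt hc hp ht' h (Or.inl (hgt' ▸ hS))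
    rw [hgt, hgt'] at this; exact lt_irrefl _ this
  · have := g_lt hc hp ht h (Or.inl (hgt ▸ hS))
    rw [hgt, hgt'] at this; exact lt_irrefl _ this

end NashAux

open NashAux

/-- Existence and uniqueness of the Nash equilibrium of the opinion game: for any positive
parameters `(θ, m, σ)` and `p > 0` there is a unique positive vector `y*` satisfying
`Σ_k m_k (y*_k - y*_i) + σ (θ_i - (y*_i)^p) y*_i = 0` for all `i`. -/
theorem nash_equilibrium_exists_unique
    {N : ℕ} (hN : 0 < N)
    (m θ : Fin N → ℝ) (hm : ∀ i, 0 < m i) (hθ : ∀ i, 0 < θ i)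
    {σ p : ℝ} (hσ : 0 < σ) (hp : 0 < p) :
    ∃! y : Fin N → ℝ, (∀ i, 0 < y i) ∧
      (∀ i, ∑ k, m k * (y k - y i) + σ * (θ i - y i ^ p) * y i = 0) := by
  have hNe : Nonempty (Fin N) := ⟨⟨0, hN⟩⟩
  set M : ℝ := ∑ k, m k with hMdef
  have hM : 0 < M := Finset.sum_pos (fun i _ => hm i) Finset.univ_nonempty
  -- equation rewriting: the Nash equation for `y` at `i` is equivalent to
  -- `g M (σ * θ i) σ p (y i) = ∑ m k * y k`.
  have heq_iff : ∀ (y : Fin N → ℝ) (i : Fin N),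
      (∑ k, m k * (y k - y i) + σ * (θ i - y i ^ p) * y i = 0) ↔
      g M (σ * θ i) σ p (y i) = ∑ k, m k * y k := by
    intro y i
    have hsum : ∑ k, m k * (y k - y i) = (∑ k, m k * y k) - M * y i := by
      rw [hMdef, Finset.sum_mul, ← Finset.sum_sub_distrib]
      congr 1; ext k; ring
    rw [hsum]
    simp only [g]
    constructor <;> intro h <;> linear_combination -h
  -- existence/uniqueness of the 1-d solution
  have hEU : ∀ (i : Fin N) (S : ℝ), 0 < S → ∃! τ, 0 < τ ∧ g M (σ * θ i) σ p τ = S :=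
    fun i S hS => existsUnique_root hM (mul_pos hσ (hθ i)) hσ hp hS
  -- define the implicit function t i S
  have hTex : ∀ (i : Fin N) (S : ℝ), ∃ τ : ℝ, 0 < S → (0 < τ ∧ g M (σ * θ i) σ p τ = S) := by
    intro i S
    by_cases h : 0 < S
    · obtain ⟨τ, hτ, _⟩ := hEU i S h
      exact ⟨τ, fun _ => hτ⟩
    · exact ⟨1, fun h' => absurd h' h⟩
  choose t ht using hTex
  have htpos : ∀ i S, 0 < S → 0 < t i S := fun i S hS => (ht i S hS).1
  have htg : ∀ i S, 0 < S → g M (σ * θ i) σ p (t i S) = S := fun i S hS => (ht i S hS).2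
  -- comparison lemmas
  have hub : ∀ (i : Fin N) (S : ℝ), 0 < S → ∀ T : ℝ, 0 < T →
      S < g M (σ * θ i) σ p T → t i S < T := by
    intro i S hS T hT hgT
    by_contra hcon
    push_neg at hcon
    rcases eq_or_lt_of_le hcon with h | h
    · rw [h, htg i S hS] at hgT; exact lt_irrefl _ hgT
    · have := g_lt hσ hp hT h (Or.inr ((htg i S hS) ▸ hS))
      rw [htg i S hS] at this
      exact absurd (this.trans hgT) (lt_irrefl _)
  have hub' : ∀ (i : Fin N) (S : ℝ), 0 < S → ∀ T : ℝ, 0 < T →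
      S ≤ g M (σ * θ i) σ p T → t i S ≤ T := by
    intro i S hS T hT hgT
    by_contra hcon
    push_neg at hcon
    have := g_lt hσ hp hT hcon (Or.inl (lt_of_lt_of_le hS hgT))
    rw [htg i S hS] at this
    linarith
  have hlb : ∀ (i : Fin N) (S : ℝ), 0 < S → ∀ T : ℝ, 0 < T →
      g M (σ * θ i) σ p T < S → T < t i S := by
    intro i S hS T hT hgT
    by_contra hcon
    push_neg at hcon
    rcases eq_or_lt_of_le hcon with h | h
    · rw [← h, htg i S hS] at hgT; exact lt_irrefl _ hgT
    · have := g_lt hσ hp (htpos i S hS) h (Or.inl ((htg i S hS) ▸ hS))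
      rw [htg i S hS] at this
      exact absurd (hgT.trans this) (lt_irrefl _)
  -- continuity of t i on (0, ∞)
  have hcont : ∀ (i : Fin N) (S0 : ℝ), 0 < S0 → ContinuousAt (t i) S0 := by
    intro i S0 hS0
    rw [Metric.continuousAt_iff]
    intro ε hε
    have ht0 : 0 < t i S0 := htpos i S0 hS0
    have hg0 : g M (σ * θ i) σ p (t i S0) = S0 := htg i S0 hS0
    set t0 : ℝ := t i S0
    set ε' : ℝ := min ε (t0 / 2) with hε'def
    have hε' : 0 < ε' := lt_min hε (by linarith)
    have hε't0 : ε' ≤ t0 / 2 := min_le_right _ _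
    have hεε : ε' ≤ ε := min_le_left _ _
    have hlo : 0 < t0 - ε' := by linarith
    have h1 : g M (σ * θ i) σ p (t0 - ε') < S0 := by
      have := g_lt hσ hp hlo (by linarith : t0 - ε' < t0) (Or.inr (hg0 ▸ hS0))
      rwa [hg0] at this
    have h2 : S0 < g M (σ * θ i) σ p (t0 + ε') := by
      have := g_lt hσ hp ht0 (by linarith : t0 < t0 + ε') (Or.inl (hg0 ▸ hS0))
      rwa [hg0] at this
    refine ⟨min (min (S0 - g M (σ * θ i) σ p (t0 - ε'))
      (g M (σ * θ i) σ p (t0 + ε') - S0)) (S0 / 2),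
      lt_min (lt_min (by linarith) (by linarith)) (by linarith), ?_⟩
    intro S hdist
    set δ : ℝ := min (min (S0 - g M (σ * θ i) σ p (t0 - ε'))
      (g M (σ * θ i) σ p (t0 + ε') - S0)) (S0 / 2) with hδdef
    rw [Real.dist_eq] at hdist ⊢
    rw [abs_lt] at hdist
    have hδ1 : δ ≤ S0 - g M (σ * θ i) σ p (t0 - ε') := le_trans (min_le_left _ _) (min_le_left _ _)
    have hδ2 : δ ≤ g M (σ * θ i) σ p (t0 + ε') - S0 :=
      le_trans (min_le_left _ _) (min_le_right _ _)
    have hδ3 : δ ≤ S0 / 2 := min_le_right _ _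
    have hSpos : 0 < S := by linarith
    have hA : t0 - ε' < t i S := hlb i S hSpos _ hlo (by linarith)
    have hB : t i S < t0 + ε' := hub i S hSpos _ (by linarith) (by linarith)
    rw [abs_lt]
    constructor <;> linarith
  -- the lower point S_lo with F(S_lo) > S_lo
  have hτ0 : ∀ k : Fin N, (0:ℝ) < (θ k) ^ p⁻¹ := fun k => Real.rpow_pos_of_pos (hθ k) _
  have hτp : ∀ k : Fin N, ((θ k) ^ p⁻¹) ^ p = θ k := fun k => Real.rpow_inv_rpow (hθ k).le hp.ne'
  have hgτ : ∀ k : Fin N, g M (σ * θ k) σ p ((θ k) ^ p⁻¹) = M * ((θ k) ^ p⁻¹) := by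
    intro k
    simp only [g]
    rw [hτp k]; ring
  obtain ⟨kmin, _, hkmin⟩ :=
    Finset.exists_min_image Finset.univ (fun k => M * ((θ k) ^ p⁻¹)) Finset.univ_nonempty
  set Slo : ℝ := (M * ((θ kmin) ^ p⁻¹)) / 2 with hSlodef
  have hSlo : 0 < Slo := by
    rw [hSlodef]
    have := mul_pos hM (hτ0 kmin)
    linarith
  have hSlo_lt : ∀ k, Slo < g M (σ * θ k) σ p ((θ k) ^ p⁻¹) := by
    intro k
    rw [hgτ k]
    have h1 := hkmin k (Finset.mem_univ k)
    have h2 : 0 < M * ((θ kmin) ^ p⁻¹) := mul_pos hM (hτ0 kmin)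
    rw [hSlodef]
    linarith
  have hFSlo : ∀ k, Slo / M < t k Slo := by
    intro k
    have h1 : t k Slo < (θ k) ^ p⁻¹ := hub k Slo hSlo _ (hτ0 k) (hSlo_lt k)
    have h2 : (t k Slo) ^ p < θ k := by
      have := Real.rpow_lt_rpow (htpos k Slo hSlo).le h1 hp
      rwa [hτp k] at this
    have h3 : g M (σ * θ k) σ p (t k Slo) = Slo := htg k Slo hSlo
    simp only [g] at h3
    have htk := htpos k Slo hSlo
    rw [div_lt_iff₀ hM]
    nlinarith [mul_pos hσ (sub_pos.mpr h2), mul_pos htk (mul_pos hσ (sub_pos.mpr h2))]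
  have hFlo : Slo < ∑ k, m k * t k Slo := by
    have hstep : ∑ k, m k * (Slo / M) < ∑ k, m k * t k Slo := by
      apply Finset.sum_lt_sum_of_nonempty Finset.univ_nonempty
      intro k _
      exact mul_lt_mul_of_pos_left (hFSlo k) (hm k)
    calc Slo = M * (Slo / M) := by field_simp
      _ = ∑ k, m k * (Slo / M) := by rw [hMdef, Finset.sum_mul]
      _ < _ := hstep
  -- the upper point S_hi with F(S_hi) < S_hi
  set q : ℝ := (p + 1)⁻¹ with hqdef
  have hq0 : 0 < q := by rw [hqdef]; positivity
  have hq1 : q < 1 := by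
    rw [hqdef, inv_lt_one_iff₀]; right; linarith
  obtain ⟨kmax, _, hkmax⟩ := Finset.exists_max_image Finset.univ θ Finset.univ_nonempty
  set B : ℝ := θ kmax with hBdef
  have hB : 0 < B := hθ kmax
  set K : ℝ := max (σ * B * (2 / σ) ^ q) (M * (2 / σ) ^ q) with hKdef
  have h1q : 0 < 1 - q := by linarith
  have htop : Tendsto (fun x : ℝ => x ^ (1 - q)) atTop atTop := tendsto_rpow_atTop h1q
  have hev : ∀ᶠ x : ℝ in atTop, K < x ^ (1 - q) := htop.eventually_gt_atTop K
  have hev2 : ∀ᶠ x : ℝ in atTop, max Slo 0 < x := eventually_gt_atTop _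
  obtain ⟨Shi, hShiK, hShilo⟩ := (hev.and hev2).exists
  have hShi_gt : Slo < Shi := lt_of_le_of_lt (le_max_left _ _) hShilo
  have hShi : 0 < Shi := lt_of_le_of_lt (le_max_right _ _) hShilo
  -- the comparison point T
  have hX : (0:ℝ) < 2 * Shi / σ := by positivity
  set X : ℝ := 2 * Shi / σ with hXdef
  set T : ℝ := X ^ q with hTdef
  have hT : 0 < T := Real.rpow_pos_of_pos hX _
  have hTpT : σ * (T ^ p * T) = 2 * Shi := by
    have h1 : T ^ p = X ^ (q * p) := by
      rw [hTdef]; exact (Real.rpow_mul hX.le q p).symm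
    have h2 : X ^ (q * p) * X ^ q = X ^ (q * p + q) := (Real.rpow_add hX _ _).symm
    have h3 : q * p + q = 1 := by
      rw [hqdef]
      have hps : p + 1 ≠ 0 := by positivity
      field_simp
    rw [h1, hTdef, h2, h3, Real.rpow_one, hXdef]
    field_simp
  have hXq : T = (2 / σ) ^ q * Shi ^ q := by
    rw [hTdef, hXdef, show 2 * Shi / σ = (2 / σ) * Shi by ring]
    exact Real.mul_rpow (by positivity) hShi.le
  have hShiq : 0 < Shi ^ q := Real.rpow_pos_of_pos hShi _
  have hSsplit : Shi = Shi ^ (1 - q) * Shi ^ q := by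
    rw [← Real.rpow_add hShi]; norm_num
  have hMT : M * T < Shi := by
    rw [hXq]
    have h1 : M * (2 / σ) ^ q ≤ K := le_max_right _ _
    calc M * ((2 / σ) ^ q * Shi ^ q) = (M * (2 / σ) ^ q) * Shi ^ q := by ring
      _ ≤ K * Shi ^ q := mul_le_mul_of_nonneg_right h1 hShiq.le
      _ < Shi ^ (1 - q) * Shi ^ q := mul_lt_mul_of_pos_right hShiK hShiq
      _ = Shi := hSsplit.symm
  have hBT : σ * B * T ≤ Shi := by
    rw [hXq]
    have h1 : σ * B * (2 / σ) ^ q ≤ K := le_max_left _ _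
    calc σ * B * ((2 / σ) ^ q * Shi ^ q) = (σ * B * (2 / σ) ^ q) * Shi ^ q := by ring
      _ ≤ K * Shi ^ q := mul_le_mul_of_nonneg_right h1 hShiq.le
      _ ≤ Shi ^ (1 - q) * Shi ^ q := mul_le_mul_of_nonneg_right hShiK.le hShiq.le
      _ = Shi := hSsplit.symm
  have hgTk : ∀ k, Shi ≤ g M (σ * θ k) σ p T := by
    intro k
    simp only [g]
    have hθB : θ k ≤ B := hkmax k (Finset.mem_univ k)
    have h1 : σ * θ k * T ≤ Shi := by nlinarith [mul_pos hσ hT]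
    nlinarith [mul_pos hM hT]
  have hFhi : ∑ k, m k * t k Shi < Shi := by
    have h1 : ∀ k, t k Shi ≤ T := fun k => hub' k Shi hShi T hT (hgTk k)
    calc ∑ k, m k * t k Shi ≤ ∑ k, m k * T := by
          apply Finset.sum_le_sum
          intro k _
          exact mul_le_mul_of_nonneg_left (h1 k) (hm k).le
      _ = M * T := by rw [hMdef, Finset.sum_mul]
      _ < Shi := hMT
  -- IVT to find the fixed point S*
  have hFc : ContinuousOn (fun S => (∑ k, m k * t k S) - S) (Set.Icc Slo Shi) := by
    intro x hx
    have hx0 : 0 < x := lt_of_lt_of_le hSlo hx.1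
    apply ContinuousAt.continuousWithinAt
    apply ContinuousAt.sub _ continuousAt_id
    exact tendsto_finset_sum _ (fun k _ => (hcont k x hx0).const_mul (m k))
  have hIV : (0 : ℝ) ∈ Set.Icc ((∑ k, m k * t k Shi) - Shi) ((∑ k, m k * t k Slo) - Slo) :=
    ⟨by linarith, by linarith⟩
  obtain ⟨S, hSmem, hFS⟩ := intermediate_value_Icc' hShi_gt.le hFc hIV
  have hSpos : 0 < S := lt_of_lt_of_le hSlo hSmem.1
  simp only at hFS
  have hSfix : ∑ k, m k * t k S = S := by linarith [hFS]
  -- uniqueness : pointwise comparison of any two solutions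
  have key : ∀ u v : Fin N → ℝ, (∀ i, 0 < u i) →
      (∀ i, ∑ k, m k * (u k - u i) + σ * (θ i - u i ^ p) * u i = 0) →
      (∀ i, 0 < v i) →
      (∀ i, ∑ k, m k * (v k - v i) + σ * (θ i - v i ^ p) * v i = 0) →
      ∀ j, u j ≤ v j := by
    intro u v hu hue hv hve j
    by_contra hcon
    push_neg at hcon
    obtain ⟨i, _, hi⟩ :=
      Finset.exists_max_image Finset.univ (fun k => u k / v k) Finset.univ_nonempty
    set r : ℝ := u i / v i with hrdef
    have hrj : 1 < u j / v j := (one_lt_div (hv j)).mpr hcon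
    have hr1 : 1 < r := lt_of_lt_of_le hrj (hi j (Finset.mem_univ j))
    have hruv : ∀ k, u k ≤ r * v k := by
      intro k
      have h1 := hi k (Finset.mem_univ k)
      have := (div_le_iff₀ (hv k)).mp h1
      linarith
    have hui : u i = r * v i := by
      rw [hrdef, div_mul_cancel₀ _ (hv i).ne']
    have hr0 : 0 < r := by linarith
    have huip : (u i) ^ p = r ^ p * (v i) ^ p := by
      rw [hui]; exact Real.mul_rpow hr0.le (hv i).le
    have hrp : 1 < r ^ p := Real.one_lt_rpow_iff_of_pos hr0 |>.mpr (Or.inl ⟨hr1, hp⟩)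
    have hSuv : (∑ k, m k * u k) ≤ r * ∑ k, m k * v k := by
      rw [Finset.mul_sum]
      apply Finset.sum_le_sum
      intro k _
      calc m k * u k ≤ m k * (r * v k) := mul_le_mul_of_nonneg_left (hruv k) (hm k).le
        _ = r * (m k * v k) := by ring
    have hue' : (∑ k, m k * u k) - M * u i + σ * (θ i - u i ^ p) * u i = 0 := by
      have h0 := hue i
      have hsum : ∑ k, m k * (u k - u i) = (∑ k, m k * u k) - M * u i := by
        rw [hMdef, Finset.sum_mul, ← Finset.sum_sub_distrib]
        congr 1; ext k; ring
      rwa [hsum] at h0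
    have hve' : (∑ k, m k * v k) - M * v i + σ * (θ i - v i ^ p) * v i = 0 := by
      have h0 := hve i
      have hsum : ∑ k, m k * (v k - v i) = (∑ k, m k * v k) - M * v i := by
        rw [hMdef, Finset.sum_mul, ← Finset.sum_sub_distrib]
        congr 1; ext k; ring
      rwa [hsum] at h0
    have hvip : 0 < (v i) ^ p := Real.rpow_pos_of_pos (hv i) _
    have hkey : (∑ k, m k * u k) - r * ∑ k, m k * v k
        = σ * r * v i * (v i ^ p) * (r ^ p - 1) := by
      rw [huip, hui] at hue'
      linear_combination hue' - r * hve'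
    have hposk : 0 < σ * r * v i * (v i ^ p) * (r ^ p - 1) := by
      have h1 : 0 < r ^ p - 1 := by linarith
      have h2 : 0 < σ * r * v i * (v i ^ p) := mul_pos (mul_pos (mul_pos hσ hr0) (hv i)) hvip
      exact mul_pos h2 h1
    linarith [hkey ▸ hposk]
  -- assemble
  refine ⟨fun i => t i S, ⟨fun i => htpos i S hSpos, fun i => ?_⟩, ?_⟩
  · rw [heq_iff (fun i => t i S) i]
    rw [hSfix]
    exact htg i S hSpos
  · intro z hz
    funext i
    have h1 : ∀ i, 0 < t i S := fun i => htpos i S hSpos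
    have h2 : ∀ i, ∑ k, m k * (t k S - t i S) + σ * (θ i - (t i S) ^ p) * t i S = 0 := by
      intro i
      rw [heq_iff (fun i => t i S) i]
      rw [hSfix]
      exact htg i S hSpos
    exact le_antisymm (key z (fun i => t i S) hz.1 hz.2 h1 h2 i)
      (key (fun i => t i S) z h1 h2 hz.1 hz.2 i)
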